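/- Let m ≥ 2 and suppose v₁, …, v_{m+2} are distinct elements of ℤ/(6m+1)ℤ with the pairwise property ‖vᵢ − vⱼ‖ ∈ [0, m−1] ∪ [m+1, 2m] for all i ≠ j (where ‖x‖ = min(x mod n, n − x mod n), n = 6m+1). Then after translating so that some vᵢ = 0, all other vⱼ lie in [1, m−1] ∪ [m+1, 2m], and among m+1 elements of this set some pair differs by exactly m — a contradiction; hence no such set of m+2 elements exists. -/

import Mathlib

/-- The cyclic distance ‖x‖ = min(x mod n, n − (x mod n)) for x ∈ ℤ/nℤ. -/
def cyclicDist (n : ℕ) (x : ZMod n) : ℕ := min x.val (n - x.val)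

/-- The circulant graph on `ZMod n` with distance set `S`: `x ~ y` iff `‖x - y‖ ∈ S`. -/
def circ (n : ℕ) (S : Set ℕ) : SimpleGraph (ZMod n) :=
  SimpleGraph.fromRel (fun x y => cyclicDist n (x - y) ∈ S)

/-- `G` is `R(s,t)`-good: no clique of size `s` and no independent set of size `t`. -/
def RGood {V : Type*} (s t : ℕ) (G : SimpleGraph V) : Prop :=
  G.CliqueFree s ∧ Gᶜ.CliqueFree t

/-- `G` is doubly saturated `R(s,t)`-good. -/
def DoublySaturated {V : Type*} (s t : ℕ) (G : SimpleGraph V) : Prop :=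
  RGood s t G ∧
  (∀ u v : V, u ≠ v → ¬ G.Adj u v → ¬ (G ⊔ SimpleGraph.edge u v).CliqueFree s) ∧
  (∀ u v : V, G.Adj u v → ¬ ((G.deleteEdges {s(u, v)})ᶜ.CliqueFree t)) ∧
  G ≠ ⊤ ∧ Gᶜ ≠ ⊤

-- nat lemma for same-class values
lemma nat_class (m a b : ℕ) (hm : 1 ≤ m) (ha1 : 1 ≤ a) (ha2 : a ≤ 2*m)
    (hb1 : 1 ≤ b) (hb2 : b ≤ 2*m) (hne : a ≠ b)
    (hmod : (a-1) % m = (b-1) % m) : a = b + m ∨ b = a + m := by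
  obtain ⟨q1, q2, r, hq1, hq2, hr, he1, he2⟩ :
      ∃ q1 q2 r, q1 < 2 ∧ q2 < 2 ∧ r < m ∧ a - 1 = m * q1 + r ∧ b - 1 = m * q2 + r :=
    ⟨(a-1)/m, (b-1)/m, (a-1)%m,
      Nat.div_lt_of_lt_mul (by omega), Nat.div_lt_of_lt_mul (by omega),
      Nat.mod_lt _ (by omega), (Nat.div_add_mod _ _).symm,
      by rw [hmod]; exact (Nat.div_add_mod _ _).symm⟩
  interval_cases q1 <;> interval_cases q2 <;> omega

theorem stmt_16 (m : ℕ) (hm : 2 ≤ m) (n : ℕ) (hn : n = 6 * m + 1)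
    (v : Fin (m + 2) → ZMod n) (hinj : Function.Injective v)
    (hdist : ∀ i j : Fin (m + 2), i ≠ j →
      cyclicDist n (v i - v j) ∈ Set.Icc 0 (m - 1) ∪ Set.Icc (m + 1) (2 * m)) :
    ((∃ (c : ZMod n) (i : Fin (m + 2)), v i + c = 0 ∧
        ∀ j : Fin (m + 2), j ≠ i →
          (v j + c).val ∈ Set.Icc 1 (m - 1) ∪ Set.Icc (m + 1) (2 * m)) ∧
      ∃ i j : Fin (m + 2), cyclicDist n (v i - v j) = m) ∧ False := by
  suffices hF : False from hF.elim
  haveI : NeZero n := ⟨by omega⟩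
  -- basic distance facts
  have hdist' : ∀ i j : Fin (m + 2), i ≠ j →
      cyclicDist n (v i - v j) ≤ 2*m ∧ cyclicDist n (v i - v j) ≠ m := by
    intro i j hij
    rcases hdist i j hij with h | h
    · simp only [Set.mem_Icc] at h; omega
    · simp only [Set.mem_Icc] at h; omega
  -- val bounds for diffs
  have hval : ∀ i j : Fin (m + 2), i ≠ j →
      (v i - v j).val ≤ 2*m ∨ 4*m+1 ≤ (v i - v j).val := by
    intro i j hij
    have h := (hdist' i j hij).1
    have hlt : (v i - v j).val < n := ZMod.val_lt _
    simp only [cyclicDist, min_le_iff] at h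
    omega
  -- exists pivot p with all vals ≤ 2m
  have hpiv : ∃ p : Fin (m+2), ∀ j : Fin (m+2), (v j - v p).val ≤ 2*m := by
    by_cases hB : ∀ j : Fin (m+2), (v j - v 0).val ≤ 2*m
    · exact ⟨0, hB⟩
    · push_neg at hB
      obtain ⟨p, hp, hmin⟩ := Finset.exists_min_image
        (Finset.univ.filter (fun j => ¬ (v j - v 0).val ≤ 2*m))
        (fun j => (v j - v 0).val)
        (by obtain ⟨j, hj⟩ := hB; exact ⟨j, Finset.mem_filter.mpr ⟨Finset.mem_univ j, by omega⟩⟩)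
      simp only [Finset.mem_filter, Finset.mem_univ, true_and, not_le] at hp
      have hp0 : p ≠ 0 := by rintro rfl; simp at hp
      have hpbig : 4*m+1 ≤ (v p - v 0).val := by
        rcases hval p 0 hp0 with h | h
        · omega
        · exact h
      refine ⟨p, fun j => ?_⟩
      by_cases hjp : j = p
      · subst hjp; simp
      by_cases hj2 : (v j - v 0).val ≤ 2*m
      · -- j in small arc: show (v p - v 0).val ≥ (v j - v 0).val + 4m+1
        set a := (v j - v 0).val with ha
        set b := (v p - v 0).val with hb
        have hblt : b < n := ZMod.val_lt _
        have hab : a < b := by omega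
        have hval_pj : (v p - v j).val = b - a := by
          have : v p - v j = (v p - v 0) - (v j - v 0) := by ring
          rw [this, ZMod.val_sub (le_of_lt hab)]
        have hd := (hdist' p j (Ne.symm hjp)).1
        have hdd : min (b - a) (n - (b - a)) ≤ 2*m := by
          simpa [cyclicDist, hval_pj] using hd
        have hge : b ≥ a + (4*m+1) := by omega
        -- then (v j - v p).val = a + n - b ≤ 2m
        have hne : v j - v p ≠ 0 := by
          intro h
          exact hjp (hinj (by linear_combination (norm := ring_nf) h))
        have : v j - v p = -(v p - v j) := by ring
        rw [this]
        haveI : NeZero (v p - v j) := ⟨by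
          intro h; apply hne; rw [show v j - v p = -(v p - v j) by ring, h, neg_zero]⟩
        rw [ZMod.val_neg_of_ne_zero, hval_pj]
        omega
      · -- j in big arc: val ≥ val p by minimality
        have hjm := hmin j (by simp only [Finset.mem_filter, Finset.mem_univ, true_and]; exact hj2)
        have := ZMod.val_lt (v j - v 0)
        have : v j - v p = (v j - v 0) - (v p - v 0) := by ring
        rw [this, ZMod.val_sub hjm]
        omega
  obtain ⟨p, hp⟩ := hpiv
  set w : Fin (m+2) → ℕ := fun j => (v j - v p).val with hw
  have hw1 : ∀ j, j ≠ p → 1 ≤ w j := by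
    intro j hj
    rcases Nat.eq_zero_or_pos (w j) with h | h
    · exfalso
      have : v j - v p = 0 := by
        rwa [← ZMod.val_eq_zero]
      exact hj (hinj (by linear_combination (norm := ring_nf) this))
    · exact h
  -- pairwise difference ≠ m
  have hdiff : ∀ j k : Fin (m+2), j ≠ k → w j ≠ w k + m := by
    intro j k hjk h
    have hle : w k ≤ w j := by omega
    have : v j - v k = (v j - v p) - (v k - v p) := by ring
    have hv : (v j - v k).val = w j - w k := by rw [this, ZMod.val_sub hle]
    have hd := hdist' j k hjk
    have : cyclicDist n (v j - v k) = w j - w k := by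
      simp only [cyclicDist, hv]
      have := hp j
      rw [min_eq_left]; omega
    omega
  -- pigeonhole
  obtain ⟨j, hjmem, k, hkmem, hjk, heq⟩ :=
    Finset.exists_ne_map_eq_of_card_lt_of_maps_to
      (s := (Finset.univ : Finset (Fin (m+2))).erase p)
      (t := Finset.range m)
      (by rw [Finset.card_range, Finset.card_erase_of_mem (Finset.mem_univ p), Finset.card_univ, Fintype.card_fin]; omega)
      (f := fun j => (w j - 1) % m)
      (by intro x _; simp only [Finset.coe_range, Set.mem_Iio, Finset.mem_range]; exact Nat.mod_lt _ (by omega))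
  have hjp : j ≠ p := Finset.ne_of_mem_erase hjmem
  have hkp : k ≠ p := Finset.ne_of_mem_erase hkmem
  have hwne : w j ≠ w k := by
    intro h
    apply hjk
    apply hinj
    have : v j - v p = v k - v p := ZMod.val_injective _ h
    linear_combination (norm := ring_nf) this
  rcases nat_class m (w j) (w k) (by omega) (hw1 j hjp) (hp j) (hw1 k hkp) (hp k)
      hwne heq with h | h
  · exact hdiff j k hjk h
  · exact hdiff k j (Ne.symm hjk) h
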